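/- Let F : H → (-∞,+∞] be convex, proper, lsc, M-Lipschitz continuous on H, with argmin F ≠ ∅ and F_λ its Moreau envelope for λ > 0. Then for all x ∈ H: F(x) - F* ≤ Mλ‖∇F_λ(x)‖ + (F_λ(x) - F*) - (λ/2)‖∇F_λ(x)‖², where F* = min F = min F_λ. In particular F(x) - F* ≤ Mλ‖∇F_λ(x)‖ + (F_λ(x) - F*). -/

import Mathlib

/-- For an M-Lipschitz convex function F with Moreau envelope F_λ:
F(x) - F* ≤ Mλ‖∇F_λ(x)‖ + (F_λ(x) - F*) - (λ/2)‖∇F_λ(x)‖². -/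
theorem lipschitz_moreau_bound {H : Type*} [NormedAddCommGroup H] [InnerProductSpace ℝ H]
    [CompleteSpace H]
    (F : H → ℝ) (hconv : ConvexOn ℝ Set.univ F)
    (M : ℝ) (hM : 0 ≤ M) (hlip : LipschitzWith (Real.toNNReal M) F)
    (Fstar : ℝ) (hFstar : ∀ z, Fstar ≤ F z) (hattain : ∃ z, F z = Fstar)
    (lam : ℝ) (hlam : 0 < lam)
    (Fl : H → ℝ) (prox : H → H)
    (hFl : ∀ x, Fl x = F (prox x) + ‖x - prox x‖ ^ 2 / (2 * lam))
    (hproxmin : ∀ x y, Fl x ≤ F y + ‖y - x‖ ^ 2 / (2 * lam))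
    (Fl' : H → H) (hgrad : ∀ x, HasGradientAt Fl (Fl' x) x)
    (hgrad_eq : ∀ x, Fl' x = (1 / lam) • (x - prox x)) :
    (∀ x, F x - Fstar ≤
      M * lam * ‖Fl' x‖ + (Fl x - Fstar) - lam / 2 * ‖Fl' x‖ ^ 2) ∧
    (∀ x, F x - Fstar ≤ M * lam * ‖Fl' x‖ + (Fl x - Fstar)) := by
  have key : ∀ x, F x - Fstar ≤
      M * lam * ‖Fl' x‖ + (Fl x - Fstar) - lam / 2 * ‖Fl' x‖ ^ 2 := by
    intro x
    have hnorm : ‖Fl' x‖ = ‖x - prox x‖ / lam := by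
      rw [hgrad_eq x, norm_smul]
      simp [abs_of_pos hlam, div_eq_mul_inv, mul_comm]
    have hxp : ‖x - prox x‖ = lam * ‖Fl' x‖ := by
      rw [hnorm]; field_simp
    have hlipx : F x - F (prox x) ≤ M * ‖x - prox x‖ := by
      have := hlip.dist_le_mul x (prox x)
      rw [Real.coe_toNNReal _ hM, dist_eq_norm, dist_eq_norm] at this
      calc F x - F (prox x) ≤ |F x - F (prox x)| := le_abs_self _
        _ = ‖F x - F (prox x)‖ := (Real.norm_eq_abs _).symm
        _ ≤ M * ‖x - prox x‖ := this
    have hsq : ‖x - prox x‖ ^ 2 / (2 * lam) = lam / 2 * ‖Fl' x‖ ^ 2 := by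
      rw [hxp]; field_simp
    have hFlx : Fl x = F (prox x) + lam / 2 * ‖Fl' x‖ ^ 2 := by
      rw [hFl x, hsq]
    have : F x ≤ M * (lam * ‖Fl' x‖) + F (prox x) := by
      have := hlipx; rw [hxp] at this; linarith
    rw [hFlx]; linarith
  refine ⟨key, fun x => ?_⟩
  have h := key x
  have : 0 ≤ lam / 2 * ‖Fl' x‖ ^ 2 := by positivity
  linarith
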